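/- Let s > 0, C ≥ 1, and N ≥ 1 be given, and let X₁,…,X_N be i.i.d. real random variables, each having a density f satisfying f(x) ≤ C·e^{−x²/(2s²)}/√(2πs²) for all x ∈ ℝ. Set X* := max_{1 ≤ j ≤ N} |X_j|. Then for every t with 0 ≤ t < 1/s, E[exp(t²·X*²/2)] ≤ exp(t²·s²·log(C·N)) / (1 − t²·s²). -/

import Mathlib

open MeasureTheory Filter Topology

noncomputable section

lemma gauss_rw (s : ℝ) : ∀ x : ℝ, -x ^ 2 / (2 * s ^ 2) = -(1 / (2 * s ^ 2)) * x ^ 2 := by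
  intro x; ring

lemma integrable_gauss (s : ℝ) (hs : 0 < s) :
    Integrable (fun x : ℝ => Real.exp (-x ^ 2 / (2 * s ^ 2))) := by
  simp_rw [gauss_rw s]
  exact integrable_exp_neg_mul_sq (by positivity)

lemma gauss_Ioi (s : ℝ) (hs : 0 < s) :
    ∫ x in Set.Ioi (0 : ℝ), Real.exp (-x ^ 2 / (2 * s ^ 2)) =
      Real.sqrt (2 * Real.pi * s ^ 2) / 2 := by
  simp_rw [gauss_rw s]
  rw [integral_gaussian_Ioi]
  congr 2
  rw [show Real.pi / (1 / (2 * s ^ 2)) = 2 * Real.pi * s ^ 2 by field_simp]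

lemma gauss_tail_aux (s : ℝ) (hs : 0 < s) (r : ℝ) (hr : 0 ≤ r) :
    ∫ x in Set.Ioi r, Real.exp (-x ^ 2 / (2 * s ^ 2)) ≤
      Real.exp (-r ^ 2 / (2 * s ^ 2)) * (Real.sqrt (2 * Real.pi * s ^ 2) / 2) := by
  have hs2 : (0 : ℝ) < 2 * s ^ 2 := by positivity
  have hsub : ∫ x in Set.Ioi r, Real.exp (-x ^ 2 / (2 * s ^ 2)) =
      ∫ y in Set.Ioi (0 : ℝ), Real.exp (-(y + r) ^ 2 / (2 * s ^ 2)) := by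
    have h1 := (measurePreserving_add_right volume r).setIntegral_preimage_emb
      (measurableEmbedding_addRight r)
      (fun x => Real.exp (-x ^ 2 / (2 * s ^ 2))) (Set.Ioi r)
    rw [← h1]
    congr 1
    ext y
    simp
  rw [hsub]
  have key : ∫ y in Set.Ioi (0 : ℝ), Real.exp (-(y + r) ^ 2 / (2 * s ^ 2)) ≤
      ∫ y in Set.Ioi (0 : ℝ),
        Real.exp (-r ^ 2 / (2 * s ^ 2)) * Real.exp (-y ^ 2 / (2 * s ^ 2)) := by
    apply setIntegral_mono_on
    · have := ((integrable_gauss s hs).comp_add_right r).integrableOn (s := Set.Ioi 0)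
      exact this
    · exact ((integrable_gauss s hs).const_mul _).integrableOn
    · exact measurableSet_Ioi
    · intro y hy
      rw [← Real.exp_add]
      apply Real.exp_le_exp.2
      rw [← add_div]
      rw [div_le_div_iff₀ hs2 hs2]
      have : (0:ℝ) < y := hy
      nlinarith [mul_nonneg (mul_nonneg this.le hr) hs2.le]
  calc ∫ y in Set.Ioi (0 : ℝ), Real.exp (-(y + r) ^ 2 / (2 * s ^ 2)) ≤ _ := key
    _ = Real.exp (-r ^ 2 / (2 * s ^ 2)) * (Real.sqrt (2 * Real.pi * s ^ 2) / 2) := by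
        rw [integral_const_mul, gauss_Ioi s hs]

lemma coord_tail (s C : ℝ) (hs : 0 < s) (hC : 1 ≤ C)
    (f : ℝ → ℝ) (hf0 : ∀ x, 0 ≤ f x)
    (hf : ∀ x, f x ≤ C * Real.exp (-x ^ 2 / (2 * s ^ 2)) / Real.sqrt (2 * Real.pi * s ^ 2))
    (r : ℝ) (hr : 0 ≤ r) :
    (volume.withDensity fun x => ENNReal.ofReal (f x)) {y : ℝ | r ≤ |y|} ≤
      ENNReal.ofReal (C * Real.exp (-r ^ 2 / (2 * s ^ 2))) := by
  have hsq : (0 : ℝ) < Real.sqrt (2 * Real.pi * s ^ 2) :=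
    Real.sqrt_pos.2 (by positivity)
  set φ : ℝ → ℝ := fun x => C / Real.sqrt (2 * Real.pi * s ^ 2) *
    Real.exp (-x ^ 2 / (2 * s ^ 2)) with hφ
  have hfφ : ∀ x, f x ≤ φ x := by
    intro x
    refine (hf x).trans (le_of_eq ?_)
    rw [hφ]; ring
  have hφint : Integrable φ := (integrable_gauss s hs).const_mul _
  have hφnn : ∀ x, 0 ≤ φ x := by
    intro x
    apply mul_nonneg (by positivity) (Real.exp_pos _).le
  -- bound measure of a measurable set T by the integral of φ over T
  have hT : ∀ T : Set ℝ, MeasurableSet T →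
      (volume.withDensity fun x => ENNReal.ofReal (f x)) T ≤
        ENNReal.ofReal (∫ x in T, φ x) := by
    intro T hTm
    rw [withDensity_apply _ hTm]
    calc ∫⁻ x in T, ENNReal.ofReal (f x) ≤ ∫⁻ x in T, ENNReal.ofReal (φ x) :=
          lintegral_mono fun x => ENNReal.ofReal_le_ofReal (hfφ x)
      _ = ENNReal.ofReal (∫ x in T, φ x) :=
          (ofReal_integral_eq_lintegral_ofReal hφint.integrableOn
            (Filter.Eventually.of_forall fun x => hφnn x)).symm
  -- the set splits into two half-lines
  have hset : {y : ℝ | r ≤ |y|} = Set.Iic (-r) ∪ Set.Ici r := by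
    ext y
    simp only [Set.mem_setOf_eq, Set.mem_union, Set.mem_Iic, Set.mem_Ici, le_abs, le_neg]
    tauto
  have htail : ∫ x in Set.Ici r, φ x ≤ C * Real.exp (-r ^ 2 / (2 * s ^ 2)) / 2 := by
    rw [hφ, integral_const_mul, integral_Ici_eq_integral_Ioi]
    have := gauss_tail_aux s hs r hr
    calc C / Real.sqrt (2 * Real.pi * s ^ 2) * ∫ x in Set.Ioi r,
            Real.exp (-x ^ 2 / (2 * s ^ 2)) ≤
        C / Real.sqrt (2 * Real.pi * s ^ 2) *
            (Real.exp (-r ^ 2 / (2 * s ^ 2)) * (Real.sqrt (2 * Real.pi * s ^ 2) / 2)) :=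
          mul_le_mul_of_nonneg_left this (by positivity)
      _ = C * Real.exp (-r ^ 2 / (2 * s ^ 2)) / 2 := by
          field_simp
  have htail' : ∫ x in Set.Iic (-r), φ x ≤ C * Real.exp (-r ^ 2 / (2 * s ^ 2)) / 2 := by
    have hneg : ∫ x in Set.Iic (-r), φ x = ∫ x in Set.Ioi r, φ (-x) := by
      rw [integral_comp_neg_Ioi]
    have hφeven : ∀ x : ℝ, φ (-x) = φ x := by
      intro x; rw [hφ]; simp [neg_sq]
    rw [hneg]
    simp_rw [hφeven]
    rw [← integral_Ici_eq_integral_Ioi]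
    exact htail
  calc (volume.withDensity fun x => ENNReal.ofReal (f x)) {y : ℝ | r ≤ |y|}
      ≤ (volume.withDensity fun x => ENNReal.ofReal (f x)) (Set.Iic (-r)) +
        (volume.withDensity fun x => ENNReal.ofReal (f x)) (Set.Ici r) := by
        rw [hset]; exact measure_union_le _ _
    _ ≤ ENNReal.ofReal (∫ x in Set.Iic (-r), φ x) + ENNReal.ofReal (∫ x in Set.Ici r, φ x) :=
        add_le_add (hT _ measurableSet_Iic) (hT _ measurableSet_Ici)
    _ ≤ ENNReal.ofReal (C * Real.exp (-r ^ 2 / (2 * s ^ 2)) / 2) +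
        ENNReal.ofReal (C * Real.exp (-r ^ 2 / (2 * s ^ 2)) / 2) :=
        add_le_add (ENNReal.ofReal_le_ofReal htail') (ENNReal.ofReal_le_ofReal htail)
    _ = ENNReal.ofReal (C * Real.exp (-r ^ 2 / (2 * s ^ 2))) := by
        rw [← ENNReal.ofReal_add (by positivity) (by positivity)]
        ring_nf

lemma max_tail (s C : ℝ) (hs : 0 < s) (hC : 1 ≤ C) (N : ℕ) (hN : 1 ≤ N)
    (f : ℝ → ℝ) (hf0 : ∀ x, 0 ≤ f x)
    (hf : ∀ x, f x ≤ C * Real.exp (-x ^ 2 / (2 * s ^ 2)) / Real.sqrt (2 * Real.pi * s ^ 2))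
    (hprob : IsProbabilityMeasure (volume.withDensity fun x => ENNReal.ofReal (f x)))
    (r : ℝ) (hr : 0 ≤ r) :
    (Measure.pi fun _ : Fin N => volume.withDensity fun x => ENNReal.ofReal (f x))
        {x : Fin N → ℝ | r ≤ ⨆ j, |x j|} ≤
      (N : ENNReal) * ENNReal.ofReal (C * Real.exp (-r ^ 2 / (2 * s ^ 2))) := by
  haveI := hprob
  haveI : Nonempty (Fin N) := Fin.pos_iff_nonempty.1 hN
  set μ := volume.withDensity fun x => ENNReal.ofReal (f x) with hμ
  have hsub : {x : Fin N → ℝ | r ≤ ⨆ j, |x j|} ⊆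
      ⋃ j : Fin N, Function.eval j ⁻¹' {y : ℝ | r ≤ |y|} := by
    intro x hx
    obtain ⟨j, hj⟩ := exists_eq_ciSup_of_finite (f := fun j : Fin N => |x j|)
    refine Set.mem_iUnion.2 ⟨j, ?_⟩
    simp only [Set.mem_preimage, Set.mem_setOf_eq, Function.eval]
    rw [hj]
    exact hx
  have heval : ∀ j : Fin N,
      (Measure.pi fun _ : Fin N => μ) (Function.eval j ⁻¹' {y : ℝ | r ≤ |y|}) =
        μ {y : ℝ | r ≤ |y|} := by
    intro j
    rw [Set.eval_preimage, Measure.pi_pi, Finset.prod_eq_single j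
      (fun i _ hij => by simp [Function.update_of_ne hij])
      (fun h => absurd (Finset.mem_univ j) h)]
    simp
  calc (Measure.pi fun _ : Fin N => μ) {x : Fin N → ℝ | r ≤ ⨆ j, |x j|}
      ≤ (Measure.pi fun _ : Fin N => μ) (⋃ j : Fin N, Function.eval j ⁻¹' {y : ℝ | r ≤ |y|}) :=
        measure_mono hsub
    _ ≤ ∑' j : Fin N, (Measure.pi fun _ : Fin N => μ) (Function.eval j ⁻¹' {y : ℝ | r ≤ |y|}) :=
        measure_iUnion_le _
    _ = ∑' _j : Fin N, μ {y : ℝ | r ≤ |y|} := by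
        exact tsum_congr heval
    _ = (N : ENNReal) * μ {y : ℝ | r ≤ |y|} := by
        rw [tsum_fintype]
        simp [Finset.sum_const, Finset.card_univ, nsmul_eq_mul]
    _ ≤ (N : ENNReal) * ENNReal.ofReal (C * Real.exp (-r ^ 2 / (2 * s ^ 2))) :=
        mul_le_mul_right (coord_tail s C hs hC f hf0 hf r hr) _

/-- **Lemma `subgaussian`.** If `X₁,…,X_N` are i.i.d. with a density `f`
satisfying `f(x) ≤ C e^{−x²/(2s²)}/√(2πs²)`, and `X* = max_j |X_j|`, then for `0 ≤ t < 1/s`,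
`E[exp(t² X*²/2)] ≤ exp(t² s² log(CN))/(1 − t² s²)`. -/
theorem subgaussian_max_mgf_bound
    (s C : ℝ) (hs : 0 < s) (hC : 1 ≤ C) (N : ℕ) (hN : 1 ≤ N)
    (f : ℝ → ℝ) (hf0 : ∀ x, 0 ≤ f x) (hfm : Measurable f)
    (hf : ∀ x, f x ≤ C * Real.exp (-x ^ 2 / (2 * s ^ 2)) / Real.sqrt (2 * Real.pi * s ^ 2))
    (hprob : IsProbabilityMeasure (volume.withDensity fun x => ENNReal.ofReal (f x)))
    (t : ℝ) (ht0 : 0 ≤ t) (hts : t < 1 / s) :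
    ∫⁻ x : Fin N → ℝ,
        ENNReal.ofReal (Real.exp (t ^ 2 * (⨆ j : Fin N, |x j|) ^ 2 / 2))
      ∂(Measure.pi fun _ : Fin N => volume.withDensity fun x => ENNReal.ofReal (f x)) ≤
      ENNReal.ofReal (Real.exp (t ^ 2 * s ^ 2 * Real.log (C * N)) / (1 - t ^ 2 * s ^ 2)) := by
  haveI := hprob
  haveI : Nonempty (Fin N) := Fin.pos_iff_nonempty.1 hN
  set μ := volume.withDensity fun x => ENNReal.ofReal (f x) with hμ
  haveI : IsProbabilityMeasure (Measure.pi fun _ : Fin N => μ) := by infer_instance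
  rcases eq_or_lt_of_le ht0 with h0 | ht0'
  · -- t = 0
    subst h0
    simp only [ne_eq, OfNat.ofNat_ne_zero, not_false_eq_true, zero_pow, zero_mul, zero_div,
      Real.exp_zero, ENNReal.ofReal_one, lintegral_one, measure_univ, sub_zero, div_one]
    exact le_rfl
  · -- 0 < t
    -- measurability of the supremum
    have hsupm : Measurable fun x : Fin N → ℝ => ⨆ j, |x j| := by
      have h2 : (fun x : Fin N → ℝ => ⨆ j, |x j|) =
          Finset.univ.sup' Finset.univ_nonempty
            (fun (j : Fin N) (x : Fin N → ℝ) => |x j|) := by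
        funext x
        rw [Finset.sup'_apply, Finset.sup'_univ_eq_ciSup]
      rw [h2]
      exact Finset.measurable_sup' Finset.univ_nonempty fun j _ => (measurable_pi_apply j).abs
    have hFm : Measurable fun x : Fin N → ℝ => Real.exp (t ^ 2 * (⨆ j, |x j|) ^ 2 / 2) :=
      Real.measurable_exp.comp (((hsupm.pow_const 2).const_mul (t ^ 2)).div_const 2)
    rw [lintegral_eq_lintegral_meas_le (Measure.pi fun _ : Fin N => μ)
      (f := fun x : Fin N → ℝ => Real.exp (t ^ 2 * (⨆ j, |x j|) ^ 2 / 2))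
      (Filter.Eventually.of_forall fun x => (Real.exp_pos _).le) hFm.aemeasurable]
    have hb0 : (0 : ℝ) < t ^ 2 * s ^ 2 := by positivity
    have hts' : t * s < 1 := by rwa [lt_div_iff₀ hs] at hts
    have hb1 : t ^ 2 * s ^ 2 < 1 := by nlinarith [mul_nonneg ht0 hs.le]
    set b := t ^ 2 * s ^ 2 with hbdef
    have hbne : b ≠ 0 := hb0.ne'
    have hβ : 1 < 1 / b := by rw [lt_div_iff₀ hb0]; linarith
    have hN1 : (1 : ℝ) ≤ (N : ℝ) := by exact_mod_cast hN
    have hK1 : (1 : ℝ) ≤ C * N := by nlinarith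
    have hK0 : (0 : ℝ) < C * N := by linarith
    have hlogK : 0 ≤ Real.log (C * N) := Real.log_nonneg hK1
    set a := Real.exp (b * Real.log (C * N)) with hadef
    have ha1 : 1 ≤ a := Real.one_le_exp (by positivity)
    have ha0 : (0 : ℝ) < a := lt_of_lt_of_le one_pos ha1
    -- pointwise tail bound for u > a
    have hpoint : ∀ u ∈ Set.Ioi a,
        (Measure.pi fun _ : Fin N => μ)
          {x : Fin N → ℝ | u ≤ Real.exp (t ^ 2 * (⨆ j, |x j|) ^ 2 / 2)} ≤
          ENNReal.ofReal (C * N * u ^ (-(1 / b))) := by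
      intro u hu
      have hu1 : 1 < u := lt_of_le_of_lt ha1 hu
      have hu0 : (0 : ℝ) < u := lt_trans one_pos hu1
      have hlogu : 0 ≤ Real.log u := Real.log_nonneg hu1.le
      set r := Real.sqrt (2 * Real.log u) / t with hrdef
      have hr0 : 0 ≤ r := by positivity
      have hsubset : {x : Fin N → ℝ | u ≤ Real.exp (t ^ 2 * (⨆ j, |x j|) ^ 2 / 2)} ⊆
          {x : Fin N → ℝ | r ≤ ⨆ j, |x j|} := by
        intro x hx
        simp only [Set.mem_setOf_eq] at hx ⊢
        set M := ⨆ j, |x j| with hM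
        have hM0 : 0 ≤ M :=
          le_ciSup_of_le (Set.Finite.bddAbove (Set.finite_range _))
            (Classical.arbitrary (Fin N)) (abs_nonneg _)
        have h1 : Real.log u ≤ t ^ 2 * M ^ 2 / 2 := (Real.log_le_iff_le_exp hu0).2 hx
        have h2 : Real.sqrt (2 * Real.log u) ≤ t * M := by
          rw [show t * M = Real.sqrt ((t * M) ^ 2) from (Real.sqrt_sq (by positivity)).symm]
          apply Real.sqrt_le_sqrt
          nlinarith
        rw [hrdef, div_le_iff₀ ht0']
        linarith
      have hexp : Real.exp (-r ^ 2 / (2 * s ^ 2)) = u ^ (-(1 / b)) := by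
        rw [Real.rpow_def_of_pos hu0]
        congr 1
        rw [hrdef, div_pow, Real.sq_sqrt (by positivity)]
        rw [hbdef]
        field_simp
      calc (Measure.pi fun _ : Fin N => μ)
            {x : Fin N → ℝ | u ≤ Real.exp (t ^ 2 * (⨆ j, |x j|) ^ 2 / 2)}
          ≤ (Measure.pi fun _ : Fin N => μ) {x : Fin N → ℝ | r ≤ ⨆ j, |x j|} :=
            measure_mono hsubset
        _ ≤ (N : ENNReal) * ENNReal.ofReal (C * Real.exp (-r ^ 2 / (2 * s ^ 2))) :=
            max_tail s C hs hC N hN f hf0 hf hprob r hr0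
        _ = ENNReal.ofReal (C * N * u ^ (-(1 / b))) := by
            rw [hexp, ← ENNReal.ofReal_natCast N,
              ← ENNReal.ofReal_mul (by positivity : (0:ℝ) ≤ (N:ℝ))]
            congr 1
            ring
    -- split the integral at a
    have hsplit : ∫⁻ u in Set.Ioi (0 : ℝ),
        (Measure.pi fun _ : Fin N => μ)
          {x : Fin N → ℝ | u ≤ Real.exp (t ^ 2 * (⨆ j, |x j|) ^ 2 / 2)} =
        (∫⁻ u in Set.Ioc 0 a,
          (Measure.pi fun _ : Fin N => μ)
            {x : Fin N → ℝ | u ≤ Real.exp (t ^ 2 * (⨆ j, |x j|) ^ 2 / 2)}) +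
        ∫⁻ u in Set.Ioi a,
          (Measure.pi fun _ : Fin N => μ)
            {x : Fin N → ℝ | u ≤ Real.exp (t ^ 2 * (⨆ j, |x j|) ^ 2 / 2)} := by
      rw [← lintegral_union measurableSet_Ioi (Set.Ioc_disjoint_Ioi le_rfl),
        Set.Ioc_union_Ioi_eq_Ioi ha0.le]
    rw [hsplit]
    -- piece 1
    have hpiece1 : ∫⁻ u in Set.Ioc 0 a,
        (Measure.pi fun _ : Fin N => μ)
          {x : Fin N → ℝ | u ≤ Real.exp (t ^ 2 * (⨆ j, |x j|) ^ 2 / 2)} ≤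
        ENNReal.ofReal a := by
      calc ∫⁻ u in Set.Ioc 0 a, (Measure.pi fun _ : Fin N => μ)
            {x : Fin N → ℝ | u ≤ Real.exp (t ^ 2 * (⨆ j, |x j|) ^ 2 / 2)}
          ≤ ∫⁻ _u in Set.Ioc 0 a, 1 := lintegral_mono fun u => prob_le_one
        _ = ENNReal.ofReal a := by
            rw [setLIntegral_one, Real.volume_Ioc, sub_zero]
    -- piece 2
    have hβlt : -(1 / b) < -1 := by linarith
    have hint : IntegrableOn (fun u : ℝ => C * N * u ^ (-(1 / b))) (Set.Ioi a) :=
      (integrableOn_Ioi_rpow_of_lt hβlt ha0).const_mul _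
    have hpiece2 : ∫⁻ u in Set.Ioi a,
        (Measure.pi fun _ : Fin N => μ)
          {x : Fin N → ℝ | u ≤ Real.exp (t ^ 2 * (⨆ j, |x j|) ^ 2 / 2)} ≤
        ENNReal.ofReal (C * N * (-a ^ (-(1 / b) + 1) / (-(1 / b) + 1))) := by
      have hgeq : ∀ u ∈ Set.Ioi a,
          C * (N : ℝ) * Real.exp (Real.log u * (-(1 / b))) = C * N * u ^ (-(1 / b)) := by
        intro u hu
        rw [Real.rpow_def_of_pos (lt_trans ha0 hu)]
      have hgm : Measurable fun u : ℝ =>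
          ENNReal.ofReal (C * (N : ℝ) * Real.exp (Real.log u * (-(1 / b)))) :=
        ENNReal.measurable_ofReal.comp
          ((Real.measurable_exp.comp (Real.measurable_log.mul_const _)).const_mul _)
      calc ∫⁻ u in Set.Ioi a, (Measure.pi fun _ : Fin N => μ)
            {x : Fin N → ℝ | u ≤ Real.exp (t ^ 2 * (⨆ j, |x j|) ^ 2 / 2)}
          ≤ ∫⁻ u in Set.Ioi a,
              ENNReal.ofReal (C * (N : ℝ) * Real.exp (Real.log u * (-(1 / b)))) :=
            setLIntegral_mono hgm fun u hu => (hpoint u hu).trans_eq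
              (by rw [hgeq u hu])
        _ = ENNReal.ofReal (∫ u in Set.Ioi a,
              C * (N : ℝ) * Real.exp (Real.log u * (-(1 / b)))) :=
            (ofReal_integral_eq_lintegral_ofReal
              (hint.congr_fun (fun u hu => (hgeq u hu).symm) measurableSet_Ioi)
              (Filter.Eventually.of_forall fun u => by positivity)).symm
        _ = ENNReal.ofReal (∫ u in Set.Ioi a, C * N * u ^ (-(1 / b))) := by
            rw [setIntegral_congr_fun measurableSet_Ioi fun u hu => hgeq u hu]
        _ = ENNReal.ofReal (C * N * (-a ^ (-(1 / b) + 1) / (-(1 / b) + 1))) := by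
            rw [MeasureTheory.integral_const_mul, integral_Ioi_rpow_of_lt hβlt ha0]
    -- assembling
    have hKa : C * N * a ^ (-(1 / b) + 1) = a := by
      have h1 : a ^ (-(1 / b) + 1) =
          Real.exp (b * Real.log (C * N) * (-(1 / b) + 1)) := by
        rw [hadef, ← Real.log_exp (b * Real.log (C * N)), ← Real.rpow_def_of_pos
          (Real.exp_pos _), Real.log_exp]
      rw [h1, ← Real.exp_log hK0, ← Real.exp_add, hadef]
      congr 1
      simp only [Real.log_exp]
      field_simp
      ring
    have hsecond : C * N * (-a ^ (-(1 / b) + 1) / (-(1 / b) + 1)) = a * b / (1 - b) := by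
      have hXne : -(1 / b) + 1 ≠ 0 := by
        intro h
        have : (1 : ℝ) / b = 1 := by linarith
        rw [this] at hβ
        exact lt_irrefl 1 hβ
      rw [show C * ↑N * (-a ^ (-(1 / b) + 1) / (-(1 / b) + 1)) =
        -(C * ↑N * a ^ (-(1 / b) + 1)) / (-(1 / b) + 1) by ring, hKa]
      have hm1 : (-1 : ℝ) + b ≠ 0 := (by linarith : (-1 : ℝ) + b < 0).ne
      have hm2 : (1 : ℝ) - b ≠ 0 := (by linarith : (0 : ℝ) < 1 - b).ne'
      field_simp
      ring
    have h1b : (0 : ℝ) < 1 - b := by linarith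
    calc (∫⁻ u in Set.Ioc 0 a, (Measure.pi fun _ : Fin N => μ)
            {x : Fin N → ℝ | u ≤ Real.exp (t ^ 2 * (⨆ j, |x j|) ^ 2 / 2)}) +
          ∫⁻ u in Set.Ioi a, (Measure.pi fun _ : Fin N => μ)
            {x : Fin N → ℝ | u ≤ Real.exp (t ^ 2 * (⨆ j, |x j|) ^ 2 / 2)}
        ≤ ENNReal.ofReal a +
            ENNReal.ofReal (C * N * (-a ^ (-(1 / b) + 1) / (-(1 / b) + 1))) :=
          add_le_add hpiece1 hpiece2
      _ = ENNReal.ofReal (a + a * b / (1 - b)) := by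
          rw [hsecond, ← ENNReal.ofReal_add ha0.le
            (div_nonneg (by positivity) h1b.le)]
      _ = ENNReal.ofReal (Real.exp (b * Real.log (C * N)) / (1 - b)) := by
          congr 1
          rw [← hadef]
          have hm2 : (1 : ℝ) - b ≠ 0 := (by linarith : (0 : ℝ) < 1 - b).ne'
          field_simp
          ring

end
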